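/- The set of all roots of F is finite. -/

import Mathlib

/-- Let `M` be a finitely generated free ℤ-module and `F` a finite set of
ℤ-linear functionals on `M` such that every ℚ-valued functional on `M` is a nonnegative
rational combination of the elements of `F`.  Then the set of all roots of `F`
(elements `α ∈ M` admitting `ϱα ∈ F` with `ϱα α = 1` and `ϱ α ≤ 0` for every other
`ϱ ∈ F`) is finite. -/
theorem roots_finite
    {M : Type*} [AddCommGroup M] [Module.Free ℤ M] [Module.Finite ℤ M]
    (F : Finset (M →ₗ[ℤ] ℤ))
    (hspan : ∀ φ : M →ₗ[ℤ] ℚ, ∃ c : (M →ₗ[ℤ] ℤ) → ℚ,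
        (∀ ϱ, 0 ≤ c ϱ) ∧ ∀ x : M, φ x = ∑ ϱ ∈ F, c ϱ * (ϱ x : ℚ)) :
    {α : M | ∃ ϱα ∈ F, ϱα α = 1 ∧ ∀ ϱ ∈ F, ϱ ≠ ϱα → ϱ α ≤ 0}.Finite := by
  classical
  set j : ℤ →ₗ[ℤ] ℚ := Algebra.linearMap ℤ ℚ with hj
  -- choose nonnegative coefficients expressing `-ψ` for each `ψ`
  have hchoice : ∀ ψ : M →ₗ[ℤ] ℤ, ∃ c : (M →ₗ[ℤ] ℤ) → ℚ,
      (∀ ϱ, 0 ≤ c ϱ) ∧ ∀ x : M, (-(ψ x : ℚ)) = ∑ ϱ ∈ F, c ϱ * (ϱ x : ℚ) := by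
    intro ψ
    obtain ⟨c, hc0, hc⟩ := hspan (-(j ∘ₗ ψ))
    refine ⟨c, hc0, fun x => ?_⟩
    have := hc x
    simpa [hj] using this
  choose c hc0 hc using hchoice
  -- the evaluation map into `F → ℤ`
  set f : M → ((ϱ : F) → ℤ) := fun α ϱ => (ϱ : M →ₗ[ℤ] ℤ) α with hf
  have hinj : Function.Injective f := by
    intro a b hab
    have hz : ∀ ϱ ∈ F, ϱ (a - b) = 0 := by
      intro ϱ hϱ
      have h := congrFun hab ⟨ϱ, hϱ⟩
      simp only [hf] at h
      simp [map_sub, h]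
    obtain b' := Module.Free.chooseBasis ℤ M
    have hrepr : ∀ i, b'.repr (a - b) i = 0 := by
      intro i
      obtain ⟨cc, _, hcc⟩ := hspan (j ∘ₗ (b'.coord i))
      have h := hcc (a - b)
      have hzero : ∑ ϱ ∈ F, cc ϱ * ((ϱ (a - b) : ℤ) : ℚ) = 0 := by
        refine Finset.sum_eq_zero fun ϱ hϱ => ?_
        simp [hz ϱ hϱ]
      rw [hzero] at h
      have : ((b'.repr (a - b) i : ℤ) : ℚ) = 0 := by
        simpa [hj, Module.Basis.coord_apply] using h
      exact_mod_cast this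
    have : a - b = 0 := by
      have := (b'.repr).map_eq_zero_iff.mp (Finsupp.ext hrepr)
      simpa using this
    exact sub_eq_zero.mp this
  -- the target box
  set T : Set ((ϱ : F) → ℤ) :=
    Set.pi Set.univ (fun ϱ : F => Set.Icc ⌈-(∑ ϱ' ∈ F, c (ϱ : M →ₗ[ℤ] ℤ) ϱ')⌉ 1) with hT
  have hTfin : T.Finite := Set.Finite.pi fun ϱ => Set.finite_Icc _ _
  refine Set.Finite.subset (hTfin.preimage hinj.injOn) ?_
  intro α hα
  obtain ⟨ϱα, hϱαF, hϱα1, hle⟩ := hα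
  intro ϱ _
  constructor
  · -- lower bound
    rw [Int.ceil_le]
    have key : -(((ϱ : M →ₗ[ℤ] ℤ) α : ℤ) : ℚ) ≤ ∑ ϱ' ∈ F, c (ϱ : M →ₗ[ℤ] ℤ) ϱ' := by
      rw [hc (ϱ : M →ₗ[ℤ] ℤ) α]
      refine Finset.sum_le_sum fun ϱ' hϱ' => ?_
      have hle1 : ((ϱ' α : ℤ) : ℚ) ≤ 1 := by
        by_cases h : ϱ' = ϱα
        · subst h; rw [hϱα1]; norm_num
        · have := hle ϱ' hϱ' h
          have : ((ϱ' α : ℤ) : ℚ) ≤ 0 := by exact_mod_cast this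
          linarith
      calc c (ϱ : M →ₗ[ℤ] ℤ) ϱ' * ((ϱ' α : ℤ) : ℚ)
          ≤ c (ϱ : M →ₗ[ℤ] ℤ) ϱ' * 1 :=
            mul_le_mul_of_nonneg_left hle1 (hc0 _ _)
        _ = c (ϱ : M →ₗ[ℤ] ℤ) ϱ' := mul_one _
    linarith
  · -- upper bound
    by_cases h : (ϱ : M →ₗ[ℤ] ℤ) = ϱα
    · simp [hf, h, hϱα1]
    · have := hle (ϱ : M →ₗ[ℤ] ℤ) ϱ.2 h
      simp only [hf]
      omega
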